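/- arXiv:math/0701542 — 2 statements merged into one kernel-verified Lean document; each statement's English description precedes it below -/
import Mathlib

section
/- For a histogram model S_m on the partition (I_λ)_{λ∈Λ_m}, on the event min_{λ∈Λ_m} p̂_λ > 0 the ideal penalty penid(m) := (P − P_n)γ(ŝ_m) satisfies the exact decomposition penid(m) = Σ_{λ∈Λ_m} (p_λ + p̂_λ)(β̂_λ − β_λ)² + (P − P_n)γ(s_m). -/
open MeasureTheory ProbabilityTheory Finset

namespace RP

/-- A histogram model: a finite measurable partition of the feature space `𝒳`. -/
structure HistModel (𝒳 : Type) [MeasurableSpace 𝒳] where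
  ι : Type
  fin : Fintype ι
  cell : ι → Set 𝒳
  meas : ∀ l, MeasurableSet (cell l)
  disj : Pairwise (Function.onFun Disjoint cell)
  cover : (⋃ l, cell l) = Set.univ

attribute [instance] HistModel.fin

variable {𝒳 Ω Ω' : Type} [MeasurableSpace 𝒳]

/-- dimension `D_m` of a histogram model. -/
noncomputable def dim (m : HistModel 𝒳) : ℕ := Fintype.card m.ι

/-- `n p̂_λ` : number of the first `n` data points falling in the cell `S`. -/
noncomputable def cnt (X : ℕ → Ω → 𝒳) (n : ℕ) (S : Set 𝒳) (ω : Ω) : ℝ :=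
  ∑ i ∈ Finset.range n, S.indicator (fun _ => (1 : ℝ)) (X i ω)

open Classical in
/-- `n p̂_λ` as a natural number. -/
noncomputable def cntN (X : ℕ → Ω → 𝒳) (n : ℕ) (S : Set 𝒳) (ω : Ω) : ℕ :=
  ((Finset.range n).filter (fun i => X i ω ∈ S)).card

/-- `p̂_λ = P_n(X ∈ S)`. -/
noncomputable def phat (X : ℕ → Ω → 𝒳) (n : ℕ) (S : Set 𝒳) (ω : Ω) : ℝ :=
  cnt X n S ω / n

/-- `β̂_λ` : empirical mean of `Y` over the cell `S`. -/
noncomputable def betahat (X : ℕ → Ω → 𝒳) (Y : ℕ → Ω → ℝ) (n : ℕ) (S : Set 𝒳) (ω : Ω) : ℝ :=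
  (∑ i ∈ Finset.range n, S.indicator (fun _ => Y i ω) (X i ω)) / cnt X n S ω

/-- `ŝ_m` : the empirical risk minimizer (histogram estimator) on the model `m`. -/
noncomputable def shat (m : HistModel 𝒳) (X : ℕ → Ω → 𝒳) (Y : ℕ → Ω → ℝ) (n : ℕ)
    (ω : Ω) (x : 𝒳) : ℝ :=
  ∑ l, (m.cell l).indicator (fun _ => betahat X Y n (m.cell l) ω) x

/-- `p_λ = P(X ∈ S)` where `P` is the law of `(X,Y)`. -/
noncomputable def pP (P : Measure (𝒳 × ℝ)) (S : Set 𝒳) : ℝ :=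
  (P (S ×ˢ (Set.univ : Set ℝ))).toReal

/-- `β_λ = E[Y | X ∈ S]`. -/
noncomputable def betaP (P : Measure (𝒳 × ℝ)) (S : Set 𝒳) : ℝ :=
  (∫ z in S ×ˢ (Set.univ : Set ℝ), z.2 ∂P) / pP P S

/-- `s_m` : the projection of the regression function on the model `m`. -/
noncomputable def sm (m : HistModel 𝒳) (P : Measure (𝒳 × ℝ)) (x : 𝒳) : ℝ :=
  ∑ l, (m.cell l).indicator (fun _ => betaP P (m.cell l)) x

/-- `P γ(t)` : true risk of a predictor `t` for the least-squares contrast. -/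
noncomputable def risk (P : Measure (𝒳 × ℝ)) (t : 𝒳 → ℝ) : ℝ :=
  ∫ z, (t z.1 - z.2) ^ 2 ∂P

/-- `ℓ(s,t) = Pγ(t) − Pγ(s)` : excess loss. -/
noncomputable def excess (P : Measure (𝒳 × ℝ)) (s t : 𝒳 → ℝ) : ℝ := risk P t - risk P s

/-- `P_n γ(t)` : empirical risk of a predictor `t`. -/
noncomputable def empRisk (X : ℕ → Ω → 𝒳) (Y : ℕ → Ω → ℝ) (n : ℕ) (t : 𝒳 → ℝ) (ω : Ω) : ℝ :=
  (∑ i ∈ Finset.range n, (t (X i ω) - Y i ω) ^ 2) / n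

/-- `σ_λ² = E[σ(X)² | X ∈ S]`. -/
noncomputable def sigmaSq (P : Measure (𝒳 × ℝ)) (σf : 𝒳 → ℝ) (S : Set 𝒳) : ℝ :=
  (∫ z in S ×ˢ (Set.univ : Set ℝ), (σf z.1) ^ 2 ∂P) / pP P S

/-- `d_λ² = E[(s(X) − s_m(X))² | X ∈ S]`. -/
noncomputable def dSq (P : Measure (𝒳 × ℝ)) (s t : 𝒳 → ℝ) (S : Set 𝒳) : ℝ :=
  (∫ z in S ×ˢ (Set.univ : Set ℝ), (s z.1 - t z.1) ^ 2 ∂P) / pP P S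

/-- `n p̂_λ W̄_λ = Σ_{X_i ∈ S} W_i`. -/
noncomputable def wsum (W : ℕ → Ω' → ℝ) (X : ℕ → Ω → 𝒳) (n : ℕ) (S : Set 𝒳)
    (ω : Ω) (w : Ω') : ℝ :=
  ∑ i ∈ Finset.range n, S.indicator (fun _ => W i w) (X i ω)

/-- `W̄_λ` : mean of the resampling weights over the cell `S`. -/
noncomputable def wbar (W : ℕ → Ω' → ℝ) (X : ℕ → Ω → 𝒳) (n : ℕ) (S : Set 𝒳)
    (ω : Ω) (w : Ω') : ℝ :=
  wsum W X n S ω w / cnt X n S ω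

/-- `β̂_λ^W` : resampled empirical mean of `Y` over the cell `S`. -/
noncomputable def betahatW (W : ℕ → Ω' → ℝ) (X : ℕ → Ω → 𝒳) (Y : ℕ → Ω → ℝ) (n : ℕ)
    (S : Set 𝒳) (ω : Ω) (w : Ω') : ℝ :=
  (∑ i ∈ Finset.range n, S.indicator (fun _ => W i w * Y i ω) (X i ω)) / wsum W X n S ω w

/-- the resampling penalty
`pen(m) = C Σ_λ E_W[(p̂_λ + p̂_λ W̄_λ)(β̂_λ^W − β̂_λ)² | W̄_λ > 0]`. -/
noncomputable def pen [MeasurableSpace Ω'] (ν : Measure Ω') (W : ℕ → Ω' → ℝ) (C : ℝ)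
    (m : HistModel 𝒳) (X : ℕ → Ω → 𝒳) (Y : ℕ → Ω → ℝ) (n : ℕ) (ω : Ω) : ℝ :=
  C * ∑ l, ∫ w,
      (phat X n (m.cell l) ω + phat X n (m.cell l) ω * wbar W X n (m.cell l) ω w) *
        (betahatW W X Y n (m.cell l) ω w - betahat X Y n (m.cell l) ω) ^ 2
      ∂(ν[|{w' | 0 < wbar W X n (m.cell l) ω w'}])

/-- mean of the first `c` resampling weights. -/
noncomputable def avgW (W : ℕ → Ω' → ℝ) (c : ℕ) (w : Ω') : ℝ :=
  (∑ i ∈ Finset.range c, W i w) / c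

/-- `R_{k,W}(n, p̂)` for `n p̂ = c`, computed on the canonical cell `{0, …, c−1}`
(for exchangeable weights it only depends on the cardinality `c` of the cell). -/
noncomputable def RkW [MeasurableSpace Ω'] (ν : Measure Ω') (W : ℕ → Ω' → ℝ) (k c : ℕ) : ℝ :=
  ∫ w, (W 0 w - avgW W c w) ^ 2 / (avgW W c w) ^ (3 - k) ∂(ν[|{w' | 0 < avgW W c w'}])

/-- `C_W(Â) = sup_{n p̂ ≥ Â} 2 / (R_{1,W}(n,p̂) + R_{2,W}(n,p̂))`. -/
noncomputable def CWsup [MeasurableSpace Ω'] (ν : Measure Ω') (W : ℕ → Ω' → ℝ)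
    (n : ℕ) (B : ℝ) : ℝ :=
  sSup {x : ℝ | ∃ c : ℕ, c ≤ n ∧ B ≤ (c : ℝ) ∧ x = 2 / (RkW ν W 1 c + RkW ν W 2 c)}

/-- `C_W′(Â) = inf_{n p̂ ≥ Â} 2 / (R_{1,W}(n,p̂) + R_{2,W}(n,p̂))`. -/
noncomputable def CWinf [MeasurableSpace Ω'] (ν : Measure Ω') (W : ℕ → Ω' → ℝ)
    (n : ℕ) (B : ℝ) : ℝ :=
  sInf {x : ℝ | ∃ c : ℕ, c ≤ n ∧ B ≤ (c : ℝ) ∧ x = 2 / (RkW ν W 1 c + RkW ν W 2 c)}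

instance {α : Type} : MeasurableSpace (Finset α) := ⊤

/-- uniform probability measure on a finite type. -/
noncomputable def unifM (α : Type) [Fintype α] [MeasurableSpace α] : Measure α :=
  (Fintype.card α : ENNReal)⁻¹ • Measure.count

/-- Efron(q) weights: `(n/q)` times a multinomial vector with parameters `(q; 1/n, …, 1/n)`. -/
def IsEfron [MeasurableSpace Ω'] (ν : Measure Ω') (W : ℕ → Ω' → ℝ) (n q : ℕ) : Prop :=
  Measure.map (fun w (i : Fin n) => W i w) ν =
    Measure.map (fun (u : Fin q → Fin n) (i : Fin n) =>
      (n : ℝ) / q * ((Finset.univ.filter fun k => u k = i).card : ℝ)) (unifM (Fin q → Fin n))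

/-- Rademacher weights: i.i.d., uniform on `{0, 2}`. -/
def IsRademacher [MeasurableSpace Ω'] (ν : Measure Ω') (W : ℕ → Ω' → ℝ) (n : ℕ) : Prop :=
  Measure.map (fun w (i : Fin n) => W i w) ν =
    Measure.map (fun (u : Fin n → Bool) (i : Fin n) => if u i then (2 : ℝ) else 0)
      (unifM (Fin n → Bool))

/-- Random hold-out(q) weights: `W_i = (n/q) 1_{i ∈ I}`, `I` uniform among `q`-subsets. -/
def IsRHO [MeasurableSpace Ω'] (ν : Measure Ω') (W : ℕ → Ω' → ℝ) (n q : ℕ) : Prop :=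
  Measure.map (fun w (i : Fin n) => W i w) ν =
    Measure.map (fun (I : {t : Finset (Fin n) // t.card = q}) (i : Fin n) =>
      if i ∈ I.1 then (n : ℝ) / q else 0) (unifM {t : Finset (Fin n) // t.card = q})

/-- Leave-one-out weights = Random hold-out(n−1) weights. -/
def IsLOO [MeasurableSpace Ω'] (ν : Measure Ω') (W : ℕ → Ω' → ℝ) (n : ℕ) : Prop :=
  IsRHO ν W n (n - 1)

/-- Exchangeability of the first `n` weights. -/
def Exchangeable [MeasurableSpace Ω'] (ν : Measure Ω') (W : ℕ → Ω' → ℝ) (n : ℕ) : Prop :=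
  ∀ e : Equiv.Perm (Fin n),
    Measure.map (fun w (i : Fin n) => W (e i) w) ν =
      Measure.map (fun w (i : Fin n) => W (i : ℕ) w) ν



section AuxProof

variable {𝒳' Ω'' : Type} [MeasurableSpace 𝒳']

lemma cell_exists (m : HistModel 𝒳') (x : 𝒳') : ∃ l, x ∈ m.cell l := by
  have : x ∈ ⋃ l, m.cell l := m.cover ▸ Set.mem_univ x
  simpa using this

lemma sum_ind (m : HistModel 𝒳') (f : m.ι → ℝ) {x : 𝒳'} {l₀ : m.ι} (hx : x ∈ m.cell l₀) :
    ∑ l, (m.cell l).indicator (fun _ => f l) x = f l₀ := by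
  rw [Finset.sum_eq_single l₀]
  · simp [Set.indicator_of_mem hx]
  · intro l _ hl
    have hd : Disjoint (m.cell l) (m.cell l₀) := m.disj hl
    have hxl : x ∉ m.cell l := fun hxl => (Set.disjoint_left.1 hd hxl) hx
    simp [Set.indicator_of_notMem hxl]
  · simp

lemma ind_one_mul (S : Set 𝒳') (x : 𝒳') (e : ℝ) :
    (S.indicator (fun _ => (1:ℝ)) x) * e = S.indicator (fun _ => e) x := by
  by_cases h : x ∈ S <;> simp [h]

lemma hist_measurable (m : HistModel 𝒳') (c : m.ι → ℝ) :
    Measurable (fun x => ∑ l, (m.cell l).indicator (fun _ => c l) x) := by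
  apply Finset.measurable_sum
  intro l _
  exact measurable_const.indicator (m.meas l)

lemma hist_abs_le (m : HistModel 𝒳') (c : m.ι → ℝ) (x : 𝒳') :
    |∑ l, (m.cell l).indicator (fun _ => c l) x| ≤ ∑ l, |c l| := by
  obtain ⟨l₀, hl₀⟩ := cell_exists m x
  rw [sum_ind m c hl₀]
  exact Finset.single_le_sum (fun l _ => abs_nonneg (c l)) (Finset.mem_univ l₀)

variable (P : Measure (𝒳' × ℝ)) [IsProbabilityMeasure P]

lemma int_y (hY2 : Integrable (fun z : 𝒳' × ℝ => z.2 ^ 2) P) :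
    Integrable (fun z : 𝒳' × ℝ => z.2) P := by
  refine Integrable.mono' (hY2.add (integrable_const 1))
    measurable_snd.aestronglyMeasurable ?_
  filter_upwards with z
  rw [Real.norm_eq_abs]
  simp only [Pi.add_apply]
  nlinarith [sq_abs z.2, sq_nonneg (|z.2| - 1), abs_nonneg z.2]

lemma int_sq_const (hY2 : Integrable (fun z : 𝒳' × ℝ => z.2 ^ 2) P) (a : ℝ) :
    Integrable (fun z : 𝒳' × ℝ => (a - z.2) ^ 2) P := by
  have h : (fun z : 𝒳' × ℝ => (a - z.2) ^ 2)
      = fun z => (a ^ 2 - 2 * a * z.2) + z.2 ^ 2 := by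
    funext z; ring
  rw [h]
  exact ((integrable_const _).sub ((int_y P hY2).const_mul _)).add hY2

lemma int_hist_sq (m : HistModel 𝒳') (c : m.ι → ℝ)
    (hY2 : Integrable (fun z : 𝒳' × ℝ => z.2 ^ 2) P) :
    Integrable (fun z : 𝒳' × ℝ =>
      ((∑ l, (m.cell l).indicator (fun _ => c l) z.1) - z.2) ^ 2) P := by
  set M := ∑ l, |c l| with hM
  refine Integrable.mono' ((integrable_const (2 * M ^ 2)).add (hY2.const_mul 2)) ?_ ?_
  · exact ((((hist_measurable m c).comp measurable_fst).sub measurable_snd).pow_const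
      2).aestronglyMeasurable
  · filter_upwards with z
    rw [Real.norm_eq_abs, abs_of_nonneg (sq_nonneg _)]
    simp only [Pi.add_apply]
    have h1 := hist_abs_le m c z.1
    have h2 := abs_nonneg (∑ l, (m.cell l).indicator (fun _ => c l) z.1)
    nlinarith [sq_nonneg ((∑ l, (m.cell l).indicator (fun _ => c l) z.1) + z.2),
      sq_abs (∑ l, (m.cell l).indicator (fun _ => c l) z.1)]

lemma risk_hist (m : HistModel 𝒳') (c : m.ι → ℝ)
    (hY2 : Integrable (fun z : 𝒳' × ℝ => z.2 ^ 2) P) :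
    risk P (fun x => ∑ l, (m.cell l).indicator (fun _ => c l) x) =
      ∑ l, ∫ z in (m.cell l) ×ˢ (Set.univ : Set ℝ), (c l - z.2) ^ 2 ∂P := by
  have hcover : (⋃ l, (m.cell l) ×ˢ (Set.univ : Set ℝ)) = Set.univ := by
    rw [← Set.iUnion_prod_const, m.cover, Set.univ_prod_univ]
  have hmeas : ∀ l, MeasurableSet ((m.cell l) ×ˢ (Set.univ : Set ℝ)) :=
    fun l => (m.meas l).prod MeasurableSet.univ
  have hdisj : Pairwise (Function.onFun Disjoint
      (fun l => (m.cell l) ×ˢ (Set.univ : Set ℝ))) := by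
    intro a b hab
    exact Set.disjoint_prod.2 (Or.inl (m.disj hab))
  rw [risk, ← setIntegral_univ, ← hcover,
    MeasureTheory.integral_iUnion hmeas hdisj (int_hist_sq P m c hY2).integrableOn,
    tsum_fintype]
  refine Finset.sum_congr rfl fun l _ => ?_
  refine setIntegral_congr_fun (hmeas l) fun z hz => ?_
  rw [sum_ind m c hz.1]

lemma setint_diff (S : Set 𝒳') (hS : MeasurableSet S)
    (hY2 : Integrable (fun z : 𝒳' × ℝ => z.2 ^ 2) P) (a d : ℝ) :
    (∫ z in S ×ˢ (Set.univ : Set ℝ), (a - z.2) ^ 2 ∂P) -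
      ∫ z in S ×ˢ (Set.univ : Set ℝ), (d - z.2) ^ 2 ∂P =
      (a ^ 2 - d ^ 2) * pP P S -
        2 * (a - d) * ∫ z in S ×ˢ (Set.univ : Set ℝ), z.2 ∂P := by
  rw [← integral_sub (int_sq_const P hY2 a).integrableOn (int_sq_const P hY2 d).integrableOn]
  have h : ∀ z : 𝒳' × ℝ, (a - z.2) ^ 2 - (d - z.2) ^ 2
      = (a ^ 2 - d ^ 2) + (-(2 * (a - d))) * z.2 := fun z => by ring
  simp_rw [h]
  rw [integral_add (integrable_const _) (((int_y P hY2).integrableOn).const_mul _),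
    MeasureTheory.integral_const_mul, setIntegral_const, smul_eq_mul, pP, measureReal_def]
  ring

end AuxProof

/-- **Exact decomposition of the ideal penalty for histograms.** On the event
`min_λ p̂_λ > 0`, `penid(m) = (P − P_n)γ(ŝ_m)
= Σ_λ (p_λ + p̂_λ)(β̂_λ − β_λ)² + (P − P_n)γ(s_m)`. -/
theorem ideal_penalty_decomposition
    (Ω 𝒳 : Type) [MeasurableSpace Ω] [MeasurableSpace 𝒳]
    (P : Measure (𝒳 × ℝ)) (hP : IsProbabilityMeasure P)
    (X : ℕ → Ω → 𝒳) (Y : ℕ → Ω → ℝ) (n : ℕ) (hn : 0 < n)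
    (hXm : ∀ i, Measurable (X i)) (hYm : ∀ i, Measurable (Y i))
    (hY2 : Integrable (fun z : 𝒳 × ℝ => z.2 ^ 2) P)
    (m : HistModel 𝒳) (hp : ∀ l, 0 < pP P (m.cell l)) :
    ∀ ω : Ω, (∀ l, 0 < cnt X n (m.cell l) ω) →
      risk P (shat m X Y n ω) - empRisk X Y n (shat m X Y n ω) ω =
        (∑ l, (pP P (m.cell l) + phat X n (m.cell l) ω) *
            (betahat X Y n (m.cell l) ω - betaP P (m.cell l)) ^ 2) +
          (risk P (sm m P) - empRisk X Y n (sm m P) ω) := by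
  haveI := hP
  intro ω hcnt
  set c : m.ι → ℝ := fun l => betahat X Y n (m.cell l) ω with hc
  set d : m.ι → ℝ := fun l => betaP P (m.cell l) with hd
  -- A_l = d l * p_l
  have hA : ∀ l, (∫ z in (m.cell l) ×ˢ (Set.univ : Set ℝ), z.2 ∂P)
      = d l * pP P (m.cell l) := by
    intro l
    have hpl := (hp l).ne'
    rw [hd]
    simp only [betaP]
    field_simp
  -- Risk side
  have hshat : shat m X Y n ω = fun x => ∑ l, (m.cell l).indicator (fun _ => c l) x := rfl
  have hsm : sm m P = fun x => ∑ l, (m.cell l).indicator (fun _ => d l) x := rfl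
  have hrisk : risk P (shat m X Y n ω) - risk P (sm m P)
      = ∑ l, pP P (m.cell l) * (c l - d l) ^ 2 := by
    rw [hshat, hsm, risk_hist P m c hY2, risk_hist P m d hY2, ← Finset.sum_sub_distrib]
    refine Finset.sum_congr rfl fun l _ => ?_
    rw [setint_diff P (m.cell l) (m.meas l) hY2 (c l) (d l), hA l]
    ring
  -- Empirical side
  have hnum : ∀ l, (∑ i ∈ Finset.range n,
      (m.cell l).indicator (fun _ => Y i ω) (X i ω)) = c l * cnt X n (m.cell l) ω := by
    intro l
    have hcl := (hcnt l).ne'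
    rw [hc]
    simp only [betahat]
    field_simp
  have hemp : empRisk X Y n (shat m X Y n ω) ω - empRisk X Y n (sm m P) ω
      = -∑ l, phat X n (m.cell l) ω * (c l - d l) ^ 2 := by
    rw [empRisk, empRisk, div_sub_div_same, ← Finset.sum_sub_distrib]
    have hptw : ∀ i ∈ Finset.range n,
        (shat m X Y n ω (X i ω) - Y i ω) ^ 2 - (sm m P (X i ω) - Y i ω) ^ 2
        = ∑ l, ((m.cell l).indicator (fun _ => (1:ℝ)) (X i ω)) *
            ((c l - Y i ω) ^ 2 - (d l - Y i ω) ^ 2) := by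
      intro i _
      obtain ⟨l₀, hl₀⟩ := cell_exists m (X i ω)
      have h1 : shat m X Y n ω (X i ω) = c l₀ := sum_ind m c hl₀
      have h2 : sm m P (X i ω) = d l₀ := sum_ind m d hl₀
      have h3 : ∀ l, ((m.cell l).indicator (fun _ => (1:ℝ)) (X i ω)) *
            ((c l - Y i ω) ^ 2 - (d l - Y i ω) ^ 2)
          = (m.cell l).indicator (fun _ => (c l - Y i ω) ^ 2 - (d l - Y i ω) ^ 2) (X i ω) :=
        fun l => ind_one_mul _ _ _
      simp_rw [h3]
      rw [sum_ind m (fun l => (c l - Y i ω) ^ 2 - (d l - Y i ω) ^ 2) hl₀, h1, h2]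
    rw [Finset.sum_congr rfl hptw, Finset.sum_comm]
    have hinner : ∀ l, (∑ i ∈ Finset.range n,
        ((m.cell l).indicator (fun _ => (1:ℝ)) (X i ω)) *
          ((c l - Y i ω) ^ 2 - (d l - Y i ω) ^ 2))
        = -(cnt X n (m.cell l) ω * (c l - d l) ^ 2) := by
      intro l
      have hexp : ∀ i, ((m.cell l).indicator (fun _ => (1:ℝ)) (X i ω)) *
            ((c l - Y i ω) ^ 2 - (d l - Y i ω) ^ 2)
          = (c l ^ 2 - d l ^ 2) * ((m.cell l).indicator (fun _ => (1:ℝ)) (X i ω))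
            - 2 * (c l - d l) * ((m.cell l).indicator (fun _ => Y i ω) (X i ω)) := by
        intro i
        rw [← ind_one_mul (m.cell l) (X i ω) (Y i ω)]
        ring
      simp_rw [hexp]
      rw [Finset.sum_sub_distrib, ← Finset.mul_sum, ← Finset.mul_sum, hnum l]
      have : (∑ i ∈ Finset.range n,
          (m.cell l).indicator (fun _ => (1:ℝ)) (X i ω)) = cnt X n (m.cell l) ω := rfl
      rw [this]
      ring
    rw [Finset.sum_congr rfl (fun l _ => hinner l), Finset.sum_neg_distrib]
    rw [neg_div]
    congr 1
    rw [Finset.sum_div]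
    refine Finset.sum_congr rfl fun l _ => ?_
    rw [phat]
    ring
  have hsplit : ∑ l, (pP P (m.cell l) + phat X n (m.cell l) ω) * (c l - d l) ^ 2
      = (∑ l, pP P (m.cell l) * (c l - d l) ^ 2)
        + ∑ l, phat X n (m.cell l) ω * (c l - d l) ^ 2 := by
    rw [← Finset.sum_add_distrib]
    exact Finset.sum_congr rfl fun l _ => by ring
  have hgoal : (∑ l, (pP P (m.cell l) + phat X n (m.cell l) ω) *
      (betahat X Y n (m.cell l) ω - betaP P (m.cell l)) ^ 2)
      = ∑ l, (pP P (m.cell l) + phat X n (m.cell l) ω) * (c l - d l) ^ 2 := rfl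
  rw [hgoal]
  linarith [hrisk, hemp, hsplit]

end RP
end

section
/- (Hölder bias, lower bound.) Let 𝒳 = [0,1], let X have a law with P(X∈I) ≥ c_min^X·Leb(I) for all intervals I ⊆ 𝒳 (density bounded from below by c_min^X > 0), and let s ∈ H(α,R) (α ∈ (0,1], R > 0) be non-constant. For D ≥ 1 let s_{m(D)} be the histogram projection of s on the regular partition of [0,1] into D intervals. Then there exists a constant c_s > 0 (depending on s, α and c_min^X but not on D) such that for all D ≥ 1, ℓ(s, s_{m(D)}) = E[(s(X) − s_{m(D)}(X))²] ≥ c_s · D^{−(1+1/α)}. In other words, non-constant α-Hölder functions satisfy assumption (Ap) with β₁ = 1 + α^{−1} and β₂ = 2α. -/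
open MeasureTheory Finset

/-- index of the cell of the regular partition of `[0,1]` into `D` intervals containing `x`. -/
noncomputable def regIdx (D : ℕ) (x : ℝ) : ℕ := min ⌊x * D⌋₊ (D - 1)

/-- the `k`-th cell of the regular partition of `[0,1]` into `D` intervals
(cells are extended so that they partition all of `ℝ`; only their trace on `[0,1]`
carries mass). -/
def regCell (D : ℕ) (k : ℕ) : Set ℝ := {x | regIdx D x = k}

/-- the histogram projection `s_m = Σ_λ E[s(X) | X ∈ I_λ] 1_{I_λ}` of `s` on the regular
partition of `[0,1]` into `D` intervals, with respect to the law `ν` of `X`. -/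
noncomputable def smProj (D : ℕ) (ν : Measure ℝ) (s : ℝ → ℝ) (x : ℝ) : ℝ :=
  (∫ t in regCell D (regIdx D x), s t ∂ν) / (ν (regCell D (regIdx D x))).toReal

lemma measurable_regIdx (D : ℕ) : Measurable (regIdx D) :=
  (Nat.measurable_floor.comp (measurable_id.mul_const _)).min measurable_const

lemma measurableSet_regCell (D k : ℕ) : MeasurableSet (regCell D k) :=
  measurable_regIdx D (measurableSet_singleton k)

lemma regIdx_lt {D : ℕ} (hD : 1 ≤ D) (x : ℝ) : regIdx D x < D :=
  lt_of_le_of_lt (min_le_right _ _) (Nat.sub_lt hD one_pos)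

lemma Ico_subset_regCell {D k : ℕ} (hk : k < D) :
    Set.Ico ((k:ℝ)/D) (((k:ℝ)+1)/D) ⊆ regCell D k := by
  intro x hx
  have hD0 : (0:ℝ) < D := Nat.cast_pos.2 (by omega)
  obtain ⟨h1, h2⟩ := hx
  have hx0 : (k:ℝ) ≤ x * D := by rw [div_le_iff₀ hD0] at h1; linarith
  have hx1 : x * D < (k:ℝ) + 1 := by rw [lt_div_iff₀ hD0] at h2; linarith
  have hfl : ⌊x * (D:ℝ)⌋₊ = k := by
    rw [Nat.floor_eq_iff (le_trans (Nat.cast_nonneg k) hx0)]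
    exact ⟨hx0, hx1⟩
  show min ⌊x * (D:ℝ)⌋₊ (D - 1) = k
  rw [hfl]
  exact min_eq_left (Nat.le_pred_of_lt hk)

lemma integrable_sq (α R : ℝ) (hα0 : 0 < α) (hR : 0 ≤ R)
    (ν : Measure ℝ) [IsFiniteMeasure ν] (hsupp : ν (Set.Icc (0:ℝ) 1)ᶜ = 0)
    (s : ℝ → ℝ) (hs : Measurable s)
    (hHol : ∀ x₁ ∈ Set.Icc (0:ℝ) 1, ∀ x₂ ∈ Set.Icc (0:ℝ) 1,
      |s x₁ - s x₂| ≤ R * |x₁ - x₂| ^ α) (β : ℝ) :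
    Integrable (fun x => (s x - β)^2) ν := by
  have hae : ∀ᵐ x ∂ν, x ∈ Set.Icc (0:ℝ) 1 := by
    rw [ae_iff]; simpa [Set.compl_def] using hsupp
  apply Integrable.mono' (g := fun _ => (|s 0| + R + |β|)^2) (integrable_const _)
    ((hs.sub measurable_const).pow_const 2).aestronglyMeasurable
  filter_upwards [hae] with x hx
  have h0 : (0:ℝ) ∈ Set.Icc (0:ℝ) 1 := by norm_num
  have h1 : |s x - s 0| ≤ R * |x - 0| ^ α := hHol x hx 0 h0
  have h2 : |x - 0| ^ α ≤ 1 := by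
    rw [sub_zero]
    exact Real.rpow_le_one (abs_nonneg _) (abs_le.2 ⟨by linarith [hx.1], hx.2⟩) hα0.le
  have h25 : (0:ℝ) ≤ |x - 0| ^ α := Real.rpow_nonneg (abs_nonneg _) _
  have h3 : |s x| ≤ |s 0| + R := by
    have h4 := abs_sub_abs_le_abs_sub (s x) (s 0)
    nlinarith
  have h5 : |s x - β| ≤ |s 0| + R + |β| := by
    calc |s x - β| ≤ |s x| + |β| := abs_sub _ _
      _ ≤ |s 0| + R + |β| := by linarith
  rw [Real.norm_eq_abs, abs_of_nonneg (sq_nonneg _)]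
  calc (s x - β)^2 = |s x - β|^2 := (sq_abs _).symm
    _ ≤ (|s 0| + R + |β|)^2 := pow_le_pow_left₀ (abs_nonneg _) h5 2

lemma cell_bound_aux (α R cminX : ℝ) (hα0 : 0 < α) (hα1 : α ≤ 1) (hR : 0 < R) (hc : 0 < cminX)
    (ν : Measure ℝ) [IsProbabilityMeasure ν] (hsupp : ν (Set.Icc (0:ℝ) 1)ᶜ = 0)
    (hdens : ∀ I : Set ℝ, I ⊆ Set.Icc (0:ℝ) 1 → I.OrdConnected → MeasurableSet I →
      cminX * (volume I).toReal ≤ (ν I).toReal)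
    (s : ℝ → ℝ) (hs : Measurable s)
    (hHol : ∀ x₁ ∈ Set.Icc (0:ℝ) 1, ∀ x₂ ∈ Set.Icc (0:ℝ) 1,
      |s x₁ - s x₂| ≤ R * |x₁ - x₂| ^ α)
    (D k : ℕ) (hk : k < D) (u v β : ℝ)
    (hu : u ∈ Set.Icc ((k:ℝ)/D) (((k:ℝ)+1)/D)) (hv : v ∈ Set.Icc ((k:ℝ)/D) (((k:ℝ)+1)/D))
    (hsuv : s u ≤ s v) (hβ : β ≤ (s u + s v)/2) :
    cminX / (16 * (4*R) ^ ((1:ℝ)/α)) * (s v - s u) ^ ((2:ℝ) + 1/α)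
      ≤ ∫ t in regCell D k, (s t - β)^2 ∂ν := by
  have hD0 : (0:ℝ) < D := Nat.cast_pos.2 (by omega)
  set a := (k:ℝ)/D with hadef
  set b := ((k:ℝ)+1)/D with hbdef
  have hba : b - a = 1/D := by rw [hadef, hbdef, div_sub_div_same]; ring_nf
  have ha0 : 0 ≤ a := by positivity
  have hb1 : b ≤ 1 := by
    rw [hbdef, div_le_one hD0]
    exact_mod_cast Nat.succ_le_of_lt hk
  have hsub01 : Set.Icc a b ⊆ Set.Icc 0 1 :=
    Set.Icc_subset_Icc ha0 hb1
  have hu01 : u ∈ Set.Icc (0:ℝ) 1 := hsub01 hu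
  have hv01 : v ∈ Set.Icc (0:ℝ) 1 := hsub01 hv
  set ω := s v - s u with hωdef
  have hω0 : 0 ≤ ω := by simp [hωdef]; linarith
  rcases hω0.eq_or_lt with h0 | hωpos
  · rw [← h0, Real.zero_rpow (by positivity), mul_zero]
    exact setIntegral_nonneg (measurableSet_regCell D k) fun x _ => sq_nonneg _
  have hαinv : 0 < 1/α := by positivity
  have hvu : |v - u| ≤ 1/D := by
    rw [abs_le]
    constructor <;> [linarith [hu.2, hv.1]; linarith [hu.1, hv.2]]
  have hωle : ω ≤ R * ((1:ℝ)/D) ^ α := by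
    have h1 : |s v - s u| ≤ R * |v - u| ^ α := hHol v hv01 u hu01
    rw [abs_of_nonneg hω0] at h1
    calc ω ≤ R * |v - u| ^ α := h1
      _ ≤ R * ((1:ℝ)/D) ^ α :=
        mul_le_mul_of_nonneg_left (Real.rpow_le_rpow (abs_nonneg _) hvu hα0.le) hR.le
  set r := (ω/(4*R)) ^ ((1:ℝ)/α) with hrdef
  have hr0 : 0 < r := Real.rpow_pos_of_pos (by positivity) _
  have hrα : r ^ α = ω/(4*R) := by
    rw [hrdef, ← Real.rpow_mul (by positivity), one_div_mul_cancel hα0.ne', Real.rpow_one]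
  have hr2D : r ≤ 1/(2*D) := by
    have hhalf : (1/2:ℝ) ≤ (1/2:ℝ)^α := by
      have := Real.rpow_le_rpow_of_exponent_ge (by norm_num : (0:ℝ) < 1/2) (by norm_num) hα1
      simpa using this
    have hd : (0:ℝ) < ((1:ℝ)/D)^α := Real.rpow_pos_of_pos (by positivity) _
    have hmul : ((1:ℝ)/(2*D))^α = (1/2:ℝ)^α * ((1:ℝ)/D)^α := by
      rw [← Real.mul_rpow (by norm_num) (by positivity)]
      ring_nf
    have h1 : ω/(4*R) ≤ ((1:ℝ)/(2*D))^α := by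
      rw [hmul]
      rw [div_le_iff₀ (by positivity)]
      nlinarith
    have h2 := Real.rpow_le_rpow (by positivity) h1 hαinv.le
    rw [← hrdef, ← Real.rpow_mul (by positivity), mul_one_div_cancel hα0.ne',
      Real.rpow_one] at h2
    exact h2
  set N := Set.Ico (max (v - r) a) (min (v + r) b) with hNdef
  have hNsub : N ⊆ Set.Ico a b := fun t ht =>
    ⟨le_trans (le_max_right _ _) ht.1, lt_of_lt_of_le ht.2 (min_le_right _ _)⟩
  have hNcell : N ⊆ regCell D k := fun t ht => Ico_subset_regCell hk (hNsub ht)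
  have hN01 : N ⊆ Set.Icc (0:ℝ) 1 := fun t ht =>
    hsub01 ⟨(hNsub ht).1, le_of_lt (hNsub ht).2⟩
  have h2r : 2*r ≤ 1/(D:ℝ) := by
    have : (1:ℝ)/(2*D) = (1/D)/2 := by ring
    linarith [hr2D]
  have hNlen : r ≤ min (v + r) b - max (v - r) a := by
    rcases le_or_gt (v + r) b with h | h
    · have hm1 : max (v - r) a ≤ v := max_le (by linarith) hv.1
      have hm2 : min (v+r) b = v + r := min_eq_left h
      linarith
    · have hva : a ≤ v - r := by linarith [hv.2]
      have hm1 : max (v-r) a = v - r := max_eq_left hva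
      have hm2 : v ≤ min (v+r) b := le_min (by linarith) hv.2
      linarith
  have hNmeas : MeasurableSet N := measurableSet_Ico
  have hνN : cminX * r ≤ (ν N).toReal := by
    have hvol : (volume N).toReal = min (v+r) b - max (v-r) a := by
      rw [hNdef, Real.volume_Ico, ENNReal.toReal_ofReal (by linarith)]
    have hd := hdens N hN01 Set.ordConnected_Ico hNmeas
    rw [hvol] at hd
    calc cminX * r ≤ cminX * (min (v+r) b - max (v-r) a) := by nlinarith
      _ ≤ _ := hd
  have hpt : ∀ t ∈ N, (ω/4)^2 ≤ (s t - β)^2 := by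
    intro t ht
    have ht01 := hN01 ht
    have hnear : |t - v| ≤ r := by
      have h1 : v - r ≤ t := le_trans (le_max_left _ _) ht.1
      have h2 : t ≤ v + r := le_of_lt (lt_of_lt_of_le ht.2 (min_le_left _ _))
      rw [abs_le]; constructor <;> linarith
    have hst : |s t - s v| ≤ ω/4 := by
      calc |s t - s v| ≤ R * |t - v|^α := hHol t ht01 v hv01
        _ ≤ R * r^α := mul_le_mul_of_nonneg_left
            (Real.rpow_le_rpow (abs_nonneg _) hnear hα0.le) hR.le
        _ = ω/4 := by rw [hrα]; field_simp
    have hlow : ω/4 ≤ s t - β := by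
      have h1 := (abs_le.1 hst).1
      have h2 : ω = s v - s u := hωdef
      linarith
    exact pow_le_pow_left₀ (by positivity) hlow 2
  have hsb : Integrable (fun x => (s x - β)^2) ν :=
    integrable_sq α R hα0 hR.le ν hsupp s hs hHol β
  have h4R : (0:ℝ) < (4*R) ^ ((1:ℝ)/α) := Real.rpow_pos_of_pos (by positivity) _
  calc cminX / (16 * (4*R) ^ ((1:ℝ)/α)) * ω ^ ((2:ℝ) + 1/α)
      = (ω/4)^2 * (cminX * r) := by
        rw [hrdef, Real.div_rpow hω0 (by positivity), Real.rpow_add hωpos,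
          (show ω^(2:ℝ) = ω^2 by rw [← Real.rpow_natCast ω 2]; norm_num)]
        field_simp
        ring
    _ ≤ (ω/4)^2 * (ν N).toReal := mul_le_mul_of_nonneg_left hνN (by positivity)
    _ ≤ ∫ t in N, (s t - β)^2 ∂ν :=
        setIntegral_ge_of_const_le_real hNmeas (measure_ne_top ν N) hpt hsb.integrableOn
    _ ≤ ∫ t in regCell D k, (s t - β)^2 ∂ν :=
        setIntegral_mono_set hsb.integrableOn
          (Filter.Eventually.of_forall fun x => sq_nonneg _)
          (HasSubset.Subset.eventuallyLE hNcell)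

lemma cell_bound (α R cminX : ℝ) (hα0 : 0 < α) (hα1 : α ≤ 1) (hR : 0 < R) (hc : 0 < cminX)
    (ν : Measure ℝ) [IsProbabilityMeasure ν] (hsupp : ν (Set.Icc (0:ℝ) 1)ᶜ = 0)
    (hdens : ∀ I : Set ℝ, I ⊆ Set.Icc (0:ℝ) 1 → I.OrdConnected → MeasurableSet I →
      cminX * (volume I).toReal ≤ (ν I).toReal)
    (s : ℝ → ℝ) (hs : Measurable s)
    (hHol : ∀ x₁ ∈ Set.Icc (0:ℝ) 1, ∀ x₂ ∈ Set.Icc (0:ℝ) 1,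
      |s x₁ - s x₂| ≤ R * |x₁ - x₂| ^ α)
    (D k : ℕ) (hk : k < D) (u v β : ℝ)
    (hu : u ∈ Set.Icc ((k:ℝ)/D) (((k:ℝ)+1)/D)) (hv : v ∈ Set.Icc ((k:ℝ)/D) (((k:ℝ)+1)/D)) :
    cminX / (16 * (4*R) ^ ((1:ℝ)/α)) * |s u - s v| ^ ((2:ℝ) + 1/α)
      ≤ ∫ t in regCell D k, (s t - β)^2 ∂ν := by
  -- reduce to the case `s u ≤ s v`
  have key : ∀ u' v', u' ∈ Set.Icc ((k:ℝ)/D) (((k:ℝ)+1)/D) →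
      v' ∈ Set.Icc ((k:ℝ)/D) (((k:ℝ)+1)/D) → s u' ≤ s v' →
      cminX / (16 * (4*R) ^ ((1:ℝ)/α)) * (s v' - s u') ^ ((2:ℝ) + 1/α)
        ≤ ∫ t in regCell D k, (s t - β)^2 ∂ν := by
    intro u' v' hu' hv' hsuv
    rcases le_or_gt β ((s u' + s v')/2) with hβ | hβ
    · exact cell_bound_aux α R cminX hα0 hα1 hR hc ν hsupp hdens s hs hHol D k hk
        u' v' β hu' hv' hsuv hβ
    · have hHol' : ∀ x₁ ∈ Set.Icc (0:ℝ) 1, ∀ x₂ ∈ Set.Icc (0:ℝ) 1,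
          |(-s ·) x₁ - (-s ·) x₂| ≤ R * |x₁ - x₂| ^ α := by
        intro x₁ h₁ x₂ h₂
        have : -s x₁ - -s x₂ = -(s x₁ - s x₂) := by ring
        rw [this, abs_neg]
        exact hHol x₁ h₁ x₂ h₂
      have h := cell_bound_aux α R cminX hα0 hα1 hR hc ν hsupp hdens (-s ·) hs.neg hHol'
        D k hk v' u' (-β) hv' hu' (by simpa using hsuv) (by linarith)
      have heq : ∀ t : ℝ, ((-s ·) t - -β)^2 = (s t - β)^2 := fun t => by ring
      simp only [heq] at h
      have hrw : -s u' - -s v' = s v' - s u' := by ring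
      rw [hrw] at h
      exact h
  rcases le_total (s u) (s v) with h | h
  · rw [abs_of_nonpos (by linarith), neg_sub]
    exact key u v hu hv h
  · rw [abs_of_nonneg (by linarith)]
    exact key v u hv hu h

/-- **Hölder bias, lower bound.** If the law `ν` of `X` on `[0,1]` has density bounded from
below (`ν(I) ≥ c_min^X Leb(I)` for all intervals `I ⊆ [0,1]`), and `s ∈ H(α,R)` with
`α ∈ (0,1]` is non-constant on `[0,1]`, then there is `c_s > 0` (not depending on `D`) with
`ℓ(s, s_{m(D)}) = E[(s(X) − s_{m(D)}(X))²] ≥ c_s D^{−(1+1/α)}` for all `D ≥ 1`: non-constant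
`α`-Hölder functions satisfy (Ap) with `β₁ = 1 + 1/α` and `β₂ = 2α`. -/
theorem holder_bias_lower (α R cminX : ℝ) (hα0 : 0 < α) (hα1 : α ≤ 1) (hR : 0 < R)
    (hc : 0 < cminX)
    (ν : Measure ℝ) (hν : IsProbabilityMeasure ν) (hsupp : ν (Set.Icc (0:ℝ) 1)ᶜ = 0)
    (hdens : ∀ I : Set ℝ, I ⊆ Set.Icc (0:ℝ) 1 → I.OrdConnected → MeasurableSet I →
      cminX * (volume I).toReal ≤ (ν I).toReal)
    (s : ℝ → ℝ) (hs : Measurable s)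
    (hHol : ∀ x₁ ∈ Set.Icc (0:ℝ) 1, ∀ x₂ ∈ Set.Icc (0:ℝ) 1,
      |s x₁ - s x₂| ≤ R * |x₁ - x₂| ^ α)
    (hnc : ∃ x ∈ Set.Icc (0:ℝ) 1, ∃ y ∈ Set.Icc (0:ℝ) 1, s x ≠ s y) :
    ∃ cs : ℝ, 0 < cs ∧ ∀ D : ℕ, 1 ≤ D →
      cs * (D : ℝ) ^ (-(1 + 1 / α)) ≤ ∫ x, (s x - smProj D ν s x) ^ 2 ∂ν := by
  haveI := hν
  obtain ⟨x0, hx0, y0, hy0, hxyle, hxy⟩ :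
      ∃ x0 ∈ Set.Icc (0:ℝ) 1, ∃ y0 ∈ Set.Icc (0:ℝ) 1, x0 ≤ y0 ∧ s x0 ≠ s y0 := by
    obtain ⟨x, hx, y, hy, h⟩ := hnc
    rcases le_total x y with h' | h'
    exacts [⟨x, hx, y, hy, h', h⟩, ⟨y, hy, x, hx, h', h.symm⟩]
  set δ := |s x0 - s y0| with hδdef
  have hδ : 0 < δ := abs_pos.2 (sub_ne_zero.2 hxy)
  set p := (2:ℝ) + 1/α with hpdef
  have hp1 : (1:ℝ) ≤ p := by
    have h : 0 < 1/α := by positivity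
    rw [hpdef]; linarith
  have hp0 : p ≠ 0 := by positivity
  have h4R : (0:ℝ) < (4*R) ^ ((1:ℝ)/α) := Real.rpow_pos_of_pos (by positivity) _
  set c' := cminX / (16 * (4*R) ^ ((1:ℝ)/α)) with hc'def
  have hc' : 0 < c' := div_pos hc (by positivity)
  refine ⟨c' * δ ^ p, mul_pos hc' (Real.rpow_pos_of_pos hδ _), fun D hD => ?_⟩
  have hD0 : (0:ℝ) < D := Nat.cast_pos.2 hD
  -- the chain of clamped grid points
  set e : ℕ → ℝ := fun j => min (max ((j:ℝ)/D) x0) y0 with hedef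
  set ω : ℕ → ℝ := fun k => |s (e (k+1)) - s (e k)| with hωdef
  have he0 : e 0 = x0 := by
    have h0 : ((0:ℕ):ℝ)/(D:ℝ) = 0 := by norm_num
    show min (max (((0:ℕ):ℝ)/(D:ℝ)) x0) y0 = x0
    rw [h0, max_eq_right hx0.1, min_eq_left hxyle]
  have heD : e D = y0 := by
    have h0 : ((D:ℕ):ℝ)/(D:ℝ) = 1 := div_self hD0.ne'
    show min (max (((D:ℕ):ℝ)/(D:ℝ)) x0) y0 = y0
    rw [h0, max_eq_left hx0.2, min_eq_right hy0.2]
  -- the cell means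
  set bfun : ℕ → ℝ := fun k => (∫ t in regCell D k, s t ∂ν) / (ν (regCell D k)).toReal
    with hbdef
  have hsm : ∀ k : ℕ, ∀ x ∈ regCell D k, smProj D ν s x = bfun k := by
    intro k x hx
    have hx' : regIdx D x = k := hx
    rw [smProj, hx', hbdef]
  -- decompose the integral over the cells
  have hunion : (⋃ k ∈ Finset.range D, regCell D k) = Set.univ := by
    ext x
    simp only [Set.mem_iUnion, Set.mem_univ, iff_true, Finset.mem_range]
    exact ⟨regIdx D x, regIdx_lt hD x, rfl⟩
  have hdisj : (↑(Finset.range D) : Set ℕ).Pairwise (Function.onFun Disjoint (regCell D)) := by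
    intro i _ j _ hij
    exact Set.disjoint_left.2 fun x hxi hxj => hij ((hxi : regIdx D x = i).symm.trans hxj)
  have hintk : ∀ k ∈ Finset.range D,
      IntegrableOn (fun x => (s x - smProj D ν s x)^2) (regCell D k) ν := by
    intro k _
    exact IntegrableOn.congr_fun
      ((integrable_sq α R hα0 hR.le ν hsupp s hs hHol (bfun k)).integrableOn)
      (fun x hx => by rw [hsm k x hx]) (measurableSet_regCell D k)
  have hEq : ∫ x, (s x - smProj D ν s x)^2 ∂ν
      = ∑ k ∈ Finset.range D, ∫ x in regCell D k, (s x - bfun k)^2 ∂ν := by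
    rw [← setIntegral_univ, ← hunion,
      integral_biUnion_finset _ (fun k _ => measurableSet_regCell D k) hdisj hintk]
    exact Finset.sum_congr rfl fun k _ =>
      setIntegral_congr_fun (measurableSet_regCell D k) fun x hx => by rw [hsm k x hx]
  -- per-cell lower bound
  have hcell : ∀ k ∈ Finset.range D,
      c' * ω k ^ p ≤ ∫ x in regCell D k, (s x - bfun k)^2 ∂ν := by
    intro k hk
    rw [Finset.mem_range] at hk
    by_cases he : e k = e (k+1)
    · have h0 : ω k = 0 := by rw [hωdef]; simp [he]
      rw [h0, Real.zero_rpow hp0, mul_zero]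
      exact setIntegral_nonneg (measurableSet_regCell D k) fun x _ => sq_nonneg _
    · have hcast : ((k+1:ℕ):ℝ) = (k:ℝ)+1 := by push_cast; ring
      have hdd : (k:ℝ)/D ≤ ((k:ℝ)+1)/D := (div_le_div_iff_of_pos_right hD0).2 (by linarith)
      have hlb : (k:ℝ)/D ≤ e k := by
        rcases le_or_gt ((k:ℝ)/D) y0 with h | h
        · exact le_min (le_max_left _ _) h
        · exfalso; apply he
          have h1 : e k = y0 :=
            min_eq_right (le_of_lt (lt_of_lt_of_le h (le_max_left _ _)))
          have h2 : e (k+1) = y0 := by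
            apply min_eq_right
            refine le_of_lt (lt_of_lt_of_le h (le_trans ?_ (le_max_left _ _)))
            rw [hcast]; exact hdd
          rw [h1, h2]
      have hub : e (k+1) ≤ ((k:ℝ)+1)/D := by
        rcases le_or_gt x0 (((k:ℝ)+1)/D) with h | h
        · calc e (k+1) ≤ max (((k+1:ℕ):ℝ)/D) x0 := min_le_left _ _
            _ = ((k:ℝ)+1)/D := by rw [hcast]; exact max_eq_left h
        · exfalso; apply he
          have h1 : e (k+1) = x0 := by
            show min (max (((k+1:ℕ):ℝ)/(D:ℝ)) x0) y0 = x0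
            rw [hcast, max_eq_right h.le, min_eq_left hxyle]
          have h2 : e k = x0 := by
            show min (max (((k:ℕ):ℝ)/(D:ℝ)) x0) y0 = x0
            rw [max_eq_right (le_of_lt (lt_of_le_of_lt hdd h)), min_eq_left hxyle]
          rw [h1, h2]
      have hmono : e k ≤ e (k+1) :=
        min_le_min (max_le_max (by rw [hcast]; exact hdd) le_rfl) le_rfl
      have hvmem : e k ∈ Set.Icc ((k:ℝ)/D) (((k:ℝ)+1)/D) := ⟨hlb, le_trans hmono hub⟩
      have humem : e (k+1) ∈ Set.Icc ((k:ℝ)/D) (((k:ℝ)+1)/D) := ⟨le_trans hlb hmono, hub⟩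
      exact cell_bound α R cminX hα0 hα1 hR hc ν hsupp hdens s hs hHol D k hk
        (e (k+1)) (e k) (bfun k) humem hvmem
  -- chain inequality
  have htel : δ ≤ ∑ k ∈ Finset.range D, ω k := by
    have h := Finset.sum_range_sub (fun j => s (e j)) D
    calc δ = |s (e D) - s (e 0)| := by rw [he0, heD, abs_sub_comm]
      _ = |∑ i ∈ Finset.range D, (s (e (i+1)) - s (e i))| := by rw [h]
      _ ≤ ∑ i ∈ Finset.range D, |s (e (i+1)) - s (e i)| := Finset.abs_sum_le_sum_abs _ _
      _ = ∑ k ∈ Finset.range D, ω k := rfl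
  set S := ∑ k ∈ Finset.range D, ω k with hSdef
  have hS0 : 0 < S := lt_of_lt_of_le hδ htel
  have hωnn : ∀ k ∈ Finset.range D, 0 ≤ ω k := fun k _ => abs_nonneg _
  have key := Real.rpow_arith_mean_le_arith_mean_rpow (Finset.range D)
    (fun _ => 1/(D:ℝ)) ω (fun _ _ => by positivity)
    (by rw [Finset.sum_const, Finset.card_range, nsmul_eq_mul]; field_simp) hωnn hp1
  rw [← Finset.mul_sum, ← Finset.mul_sum] at key
  have hinv : ((1:ℝ)/D)^p = (D:ℝ)^(-p) := by
    rw [one_div, Real.inv_rpow hD0.le, ← Real.rpow_neg hD0.le]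
  have hD1p : (D:ℝ)^((1:ℝ)-p) = D * (D:ℝ)^(-p) := by
    rw [sub_eq_add_neg, Real.rpow_add hD0, Real.rpow_one]
  have hmean : (D:ℝ)^((1:ℝ)-p) * δ^p ≤ ∑ k ∈ Finset.range D, ω k ^ p := by
    have hSp : δ^p ≤ S^p := Real.rpow_le_rpow hδ.le htel (by positivity)
    calc (D:ℝ)^((1:ℝ)-p) * δ^p ≤ (D:ℝ)^((1:ℝ)-p) * S^p :=
          mul_le_mul_of_nonneg_left hSp (Real.rpow_nonneg hD0.le _)
      _ = (D:ℝ) * (((1:ℝ)/D) * S)^p := by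
          rw [Real.mul_rpow (by positivity) hS0.le, hinv, hD1p]; ring
      _ ≤ (D:ℝ) * (((1:ℝ)/D) * ∑ k ∈ Finset.range D, ω k ^ p) :=
          mul_le_mul_of_nonneg_left key hD0.le
      _ = ∑ k ∈ Finset.range D, ω k ^ p := by field_simp
  have hexp : -(1 + 1/α) = (1:ℝ) - p := by rw [hpdef]; ring
  calc c' * δ^p * (D:ℝ)^(-(1+1/α)) = c' * ((D:ℝ)^((1:ℝ)-p) * δ^p) := by rw [hexp]; ring
    _ ≤ c' * ∑ k ∈ Finset.range D, ω k ^ p := mul_le_mul_of_nonneg_left hmean hc'.le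
    _ = ∑ k ∈ Finset.range D, c' * ω k ^ p := Finset.mul_sum _ _ _
    _ ≤ ∑ k ∈ Finset.range D, ∫ x in regCell D k, (s x - bfun k)^2 ∂ν :=
        Finset.sum_le_sum hcell
    _ = ∫ x, (s x - smProj D ν s x)^2 ∂ν := hEq.symm
end
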